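/- If a hereditary class of graphs contains, for every positive integer k, the graph induced by the string S^k for some fixed nonempty (0,1)-string S, then the class contains infinitely many pairwise non-isomorphic prime graphs. -/

import Mathlib

/-- A homogeneous set of a finite simple graph: a set `X` of vertices with
`2 ≤ |X| < |V|` such that every vertex outside `X` is complete or anticomplete to `X`. -/
def IsHomogeneousSet {V : Type*} [Fintype V] (G : SimpleGraph V) (X : Finset V) : Prop :=
  2 ≤ X.card ∧ X.card < Fintype.card V ∧
    ∀ v ∉ X, (∀ x ∈ X, G.Adj v x) ∨ (∀ x ∈ X, ¬ G.Adj v x)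

/-- A graph is prime if it has no homogeneous set. -/
def IsPrimeGraph {V : Type*} [Fintype V] (G : SimpleGraph V) : Prop :=
  ¬ ∃ X : Finset V, IsHomogeneousSet G X

/-- The graph encoded by a `(0,1)`-string `S = s₁ ⋯ s_m`, on vertices `v 0, …, v m`:
for `i < j`, `v i ~ v j` iff (`s_j = 0` and `i = j-1`) or (`s_j = 1` and `i ≠ j-1`),
where `false` plays the role of `0` and `true` of `1`. -/
def stringGraph (S : List Bool) : SimpleGraph (Fin (S.length + 1)) :=
  SimpleGraph.fromRel fun i j =>
    (i : ℕ) < (j : ℕ) ∧ (S.getD ((j : ℕ) - 1) false = false ↔ (i : ℕ) = (j : ℕ) - 1)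

lemma sg_adj_iff {S : List Bool} {i j : Fin (S.length + 1)} (hij : (i : ℕ) < (j : ℕ)) :
    (stringGraph S).Adj i j ↔ (S.getD ((j : ℕ) - 1) false = false ↔ (i : ℕ) = (j : ℕ) - 1) := by
  have hne : i ≠ j := by intro h; subst h; exact lt_irrefl _ hij
  simp only [stringGraph, SimpleGraph.fromRel_adj]
  constructor
  · rintro ⟨-, ⟨-, h⟩ | ⟨h, -⟩⟩
    · exact h
    · omega
  · exact fun h => ⟨hne, Or.inl ⟨hij, h⟩⟩

lemma sg_adj_succ {S : List Bool} {i j : Fin (S.length + 1)} (h : (i : ℕ) + 1 = (j : ℕ)) :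
    (stringGraph S).Adj i j ↔ S.getD ((i : ℕ)) false = false := by
  rw [sg_adj_iff (by omega)]
  have hji : (j : ℕ) - 1 = (i : ℕ) := by omega
  rw [hji]; simp

lemma sg_adj_far {S : List Bool} {i j : Fin (S.length + 1)} (h : (i : ℕ) + 2 ≤ (j : ℕ)) :
    (stringGraph S).Adj i j ↔ S.getD ((j : ℕ) - 1) false = true := by
  rw [sg_adj_iff (by omega)]
  have : ¬ ((i : ℕ) = (j : ℕ) - 1) := by omega
  simp only [this, iff_false, Bool.not_eq_false]

lemma sg_adj_succ' {S : List Bool} {i j : Fin (S.length + 1)} (h : (i : ℕ) + 1 = (j : ℕ)) :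
    (stringGraph S).Adj j i ↔ S.getD ((i : ℕ)) false = false := by
  rw [SimpleGraph.adj_comm]; exact sg_adj_succ h

lemma sg_adj_far' {S : List Bool} {i j : Fin (S.length + 1)} (h : (i : ℕ) + 2 ≤ (j : ℕ)) :
    (stringGraph S).Adj j i ↔ S.getD ((j : ℕ) - 1) false = true := by
  rw [SimpleGraph.adj_comm]; exact sg_adj_far h

lemma hom_pure {V : Type*} [Fintype V] {G : SimpleGraph V} {X : Finset V}
    (hX : IsHomogeneousSet G X) {w u v : V} (hw : w ∉ X) (hu : u ∈ X) (hv : v ∈ X) :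
    (G.Adj w u ↔ G.Adj w v) := by
  rcases hX.2.2 w hw with h | h
  · exact iff_of_true (h u hu) (h v hv)
  · exact iff_of_false (h u hu) (h v hv)

lemma sg_last_mem {S : List Bool} {X : Finset (Fin (S.length + 1))}
    (hX : IsHomogeneousSet (stringGraph S) X) : Fin.last S.length ∈ X := by
  have hne : X.Nonempty := Finset.card_pos.mp (lt_of_lt_of_le two_pos hX.1)
  set j := X.max' hne with hj
  have hjX : j ∈ X := X.max'_mem hne
  obtain ⟨i, hiX, hij⟩ := Finset.exists_mem_ne (lt_of_lt_of_le one_lt_two hX.1) j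
  have hilt : (i : ℕ) < (j : ℕ) := by
    have h1 : i ≤ j := X.le_max' i hiX
    rw [Fin.le_def] at h1
    rcases lt_or_eq_of_le h1 with h | h
    · exact h
    · exact absurd (Fin.ext h) hij
  by_contra hlast
  have hjn : (j : ℕ) < S.length := by
    rcases lt_or_eq_of_le (Nat.lt_succ_iff.mp j.2) with h | h
    · exact h
    · exact absurd (show j = Fin.last S.length from Fin.ext h) (fun e => hlast (e ▸ hjX))
  set w : Fin (S.length + 1) := ⟨(j : ℕ) + 1, by omega⟩ with hw
  have hwX : w ∉ X := by
    intro hmem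
    have := X.le_max' w hmem
    rw [Fin.le_def] at this
    simp only [hw, Fin.val_mk] at this
    omega
  have hp := hom_pure hX hwX hjX hiX
  have e1 : (stringGraph S).Adj w j ↔ S.getD ((j : ℕ)) false = false :=
    sg_adj_succ' (by simp [hw])
  have e2 : (stringGraph S).Adj w i ↔ S.getD ((j : ℕ)) false = true := by
    have := sg_adj_far' (S := S) (i := i) (j := w) (by simp [hw]; omega)
    simpa [hw] using this
  rw [e1, e2] at hp
  cases h : S.getD ((j : ℕ)) false <;> simp [h] at hp

lemma sg_no_homog_of_01 {S : List Bool} (hlen : 1 ≤ S.length)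
    {X : Finset (Fin (S.length + 1))} (hX : IsHomogeneousSet (stringGraph S) X)
    (h0 : (⟨0, Nat.succ_pos _⟩ : Fin (S.length + 1)) ∈ X)
    (h1 : (⟨1, by omega⟩ : Fin (S.length + 1)) ∈ X) : False := by
  have key : ∀ k, ∀ hk : k < S.length + 1, (⟨k, hk⟩ : Fin (S.length + 1)) ∈ X := by
    intro k
    induction k using Nat.strong_induction_on with
    | _ k IH =>
      intro hk
      match k with
      | 0 => exact h0
      | 1 => exact h1
      | (m+2) =>
        by_contra hk2
        set w : Fin (S.length + 1) := ⟨m + 2, hk⟩ with hw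
        have hprev : (⟨m + 1, by omega⟩ : Fin (S.length + 1)) ∈ X := IH (m+1) (by omega) (by omega)
        have hp := hom_pure hX hk2 hprev h0
        have e1 : (stringGraph S).Adj w ⟨m + 1, by omega⟩ ↔ S.getD (m + 1) false = false :=
          sg_adj_succ' (by simp [hw])
        have e2 : (stringGraph S).Adj w ⟨0, Nat.succ_pos _⟩ ↔ S.getD (m + 1) false = true := by
          have := sg_adj_far' (S := S) (i := (⟨0, Nat.succ_pos _⟩ : Fin (S.length+1))) (j := w)
            (by simp [hw])
          simpa [hw] using this
        rw [e1, e2] at hp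
        cases h : S.getD (m + 1) false <;> simp [h] at hp
  have huniv : X = Finset.univ := by
    apply Finset.eq_univ_iff_forall.mpr
    intro v
    have := key v.1 v.2
    simpa using this
  have := hX.2.1
  rw [huniv, Finset.card_univ] at this
  exact lt_irrefl _ this

lemma prime_of_const (S : List Bool) (h3 : 3 ≤ S.length)
    (hc : ∀ i j, i < S.length → j < S.length → S.getD i false = S.getD j false) :
    IsPrimeGraph (stringGraph S) := by
  rintro ⟨X, hX⟩
  have hne : X.Nonempty := Finset.card_pos.mp (lt_of_lt_of_le two_pos hX.1)
  have hlast : Fin.last S.length ∈ X := sg_last_mem hX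
  set a := X.min' hne with ha
  have haX : a ∈ X := X.min'_mem hne
  obtain ⟨b, hbX, hba⟩ := Finset.exists_mem_ne (lt_of_lt_of_le one_lt_two hX.1) a
  have hab : (a : ℕ) < (b : ℕ) := by
    have h1 : a ≤ b := X.min'_le b hbX
    rw [Fin.le_def] at h1
    rcases lt_or_eq_of_le h1 with h | h
    · exact h
    · exact absurd (Fin.ext h).symm hba
  -- min is 0
  have h0 : (a : ℕ) = 0 := by
    by_contra hc0
    set w : Fin (S.length + 1) := ⟨(a : ℕ) - 1, by omega⟩ with hw
    have hwX : w ∉ X := by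
      intro hmem
      have := X.min'_le w hmem
      rw [Fin.le_def] at this
      simp only [hw, Fin.val_mk] at this
      omega
    have hp := hom_pure hX hwX haX hlast
    have e1 : (stringGraph S).Adj w a ↔ S.getD ((a : ℕ) - 1) false = false := by
      have := sg_adj_succ (S := S) (i := w) (j := a) (by simp [hw]; omega)
      simpa [hw] using this
    have e2 : (stringGraph S).Adj w (Fin.last S.length) ↔ S.getD (S.length - 1) false = true := by
      have := sg_adj_far (S := S) (i := w) (j := Fin.last S.length) (by simp [hw]; omega)
      simpa [hw] using this
    rw [e1, e2] at hp
    have heq : S.getD ((a : ℕ) - 1) false = S.getD (S.length - 1) false :=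
      hc _ _ (by have := a.2; omega) (by omega)
    rw [heq] at hp
    cases h : S.getD (S.length - 1) false <;> simp [h] at hp
  -- 0 ∈ X
  have h0X : (⟨0, Nat.succ_pos _⟩ : Fin (S.length + 1)) ∈ X := by
    have : a = (⟨0, Nat.succ_pos _⟩ : Fin (S.length + 1)) := Fin.ext h0
    exact this ▸ haX
  -- 1 ∈ X
  have h1X : (⟨1, by omega⟩ : Fin (S.length + 1)) ∈ X := by
    by_contra h1n
    have hp := hom_pure hX h1n h0X hlast
    have e1 : (stringGraph S).Adj ⟨1, by omega⟩ ⟨0, Nat.succ_pos _⟩ ↔ S.getD 0 false = false := by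
      have := sg_adj_succ' (S := S) (i := (⟨0, Nat.succ_pos _⟩ : Fin (S.length+1)))
        (j := (⟨1, by omega⟩ : Fin (S.length+1))) (by simp)
      simpa using this
    have e2 : (stringGraph S).Adj ⟨1, by omega⟩ (Fin.last S.length) ↔
        S.getD (S.length - 1) false = true := by
      have := sg_adj_far (S := S) (i := (⟨1, by omega⟩ : Fin (S.length+1)))
        (j := Fin.last S.length) (by simp; omega)
      simpa using this
    rw [e1, e2] at hp
    have heq : S.getD 0 false = S.getD (S.length - 1) false := hc _ _ (by omega) (by omega)
    rw [heq] at hp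
    cases h : S.getD (S.length - 1) false <;> simp [h] at hp
  exact sg_no_homog_of_01 (by omega) hX h0X h1X

lemma prime_of_exists (S : List Bool) (h5 : 5 ≤ S.length) (r : ℕ) (hr3 : 3 ≤ r)
    (hrn : r + 2 ≤ S.length)
    (hrs : S.getD (r - 1) false ≠ S.getD (S.length - 1) false) :
    IsPrimeGraph (stringGraph S) := by
  rintro ⟨X, hX⟩
  have hne : X.Nonempty := Finset.card_pos.mp (lt_of_lt_of_le two_pos hX.1)
  have hlast : Fin.last S.length ∈ X := sg_last_mem hX
  set a := X.min' hne with ha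
  have haX : a ∈ X := X.min'_mem hne
  obtain ⟨b, hbX, hba⟩ := Finset.exists_mem_ne (lt_of_lt_of_le one_lt_two hX.1) a
  have hab : (a : ℕ) < (b : ℕ) := by
    have h1 : a ≤ b := X.min'_le b hbX
    rw [Fin.le_def] at h1
    rcases lt_or_eq_of_le h1 with h | h
    · exact h
    · exact absurd (Fin.ext h).symm hba
  -- the minimum is at most 1
  have hmin1 : (a : ℕ) ≤ 1 := by
    by_contra hc0
    push_neg at hc0
    set w1 : Fin (S.length + 1) := ⟨(a : ℕ) - 1, by omega⟩ with hw1
    set w2 : Fin (S.length + 1) := ⟨(a : ℕ) - 2, by omega⟩ with hw2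
    have hw1X : w1 ∉ X := by
      intro hmem
      have := X.min'_le w1 hmem
      rw [Fin.le_def] at this
      simp only [hw1, Fin.val_mk] at this
      omega
    have hw2X : w2 ∉ X := by
      intro hmem
      have := X.min'_le w2 hmem
      rw [Fin.le_def] at this
      simp only [hw2, Fin.val_mk] at this
      omega
    have hp1 := hom_pure hX hw1X haX hbX
    have hp2 := hom_pure hX hw2X haX hbX
    have e11 : (stringGraph S).Adj w1 a ↔ S.getD ((a : ℕ) - 1) false = false := by
      have := sg_adj_succ (S := S) (i := w1) (j := a) (by simp [hw1]; omega)
      simpa [hw1] using this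
    have e12 : (stringGraph S).Adj w1 b ↔ S.getD ((b : ℕ) - 1) false = true := by
      have := sg_adj_far (S := S) (i := w1) (j := b) (by simp [hw1]; omega)
      simpa [hw1] using this
    have e21 : (stringGraph S).Adj w2 a ↔ S.getD ((a : ℕ) - 1) false = true := by
      have := sg_adj_far (S := S) (i := w2) (j := a) (by simp [hw2]; omega)
      simpa [hw2] using this
    have e22 : (stringGraph S).Adj w2 b ↔ S.getD ((b : ℕ) - 1) false = true := by
      have := sg_adj_far (S := S) (i := w2) (j := b) (by simp [hw2]; omega)
      simpa [hw2] using this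
    rw [e11, e12] at hp1
    rw [e21, e22] at hp2
    cases h1 : S.getD ((a : ℕ) - 1) false <;> cases h2 : S.getD ((b : ℕ) - 1) false <;>
      rw [h1, h2] at hp1 hp2 <;> simp at hp1 hp2
  -- r belongs to X
  have hrX : (⟨r, by omega⟩ : Fin (S.length + 1)) ∈ X := by
    by_contra hrn2
    have hp := hom_pure hX hrn2 haX hlast
    have e1 : (stringGraph S).Adj ⟨r, by omega⟩ a ↔ S.getD (r - 1) false = true := by
      have := sg_adj_far' (S := S) (i := a) (j := (⟨r, by omega⟩ : Fin (S.length+1)))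
        (by simp; omega)
      simpa using this
    have e2 : (stringGraph S).Adj ⟨r, by omega⟩ (Fin.last S.length) ↔
        S.getD (S.length - 1) false = true := by
      have := sg_adj_far (S := S) (i := (⟨r, by omega⟩ : Fin (S.length+1)))
        (j := Fin.last S.length) (by simp; omega)
      simpa using this
    rw [e1, e2] at hp
    cases h1 : S.getD (r - 1) false <;> cases h2 : S.getD (S.length - 1) false <;>
      rw [h1, h2] at hp hrs <;> simp at hp hrs
  -- the minimum is 0
  have h0 : (a : ℕ) = 0 := by
    by_contra hc0
    have ha1 : (a : ℕ) = 1 := by omega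
    have hw0X : (⟨0, Nat.succ_pos _⟩ : Fin (S.length + 1)) ∉ X := by
      intro hmem
      have := X.min'_le _ hmem
      rw [Fin.le_def] at this
      simp only [Fin.val_mk] at this
      omega
    have hp := hom_pure hX hw0X hrX hlast
    have e1 : (stringGraph S).Adj ⟨0, Nat.succ_pos _⟩ ⟨r, by omega⟩ ↔
        S.getD (r - 1) false = true := by
      have := sg_adj_far (S := S) (i := (⟨0, Nat.succ_pos _⟩ : Fin (S.length+1)))
        (j := (⟨r, by omega⟩ : Fin (S.length+1))) (by simp; omega)
      simpa using this
    have e2 : (stringGraph S).Adj ⟨0, Nat.succ_pos _⟩ (Fin.last S.length) ↔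
        S.getD (S.length - 1) false = true := by
      have := sg_adj_far (S := S) (i := (⟨0, Nat.succ_pos _⟩ : Fin (S.length+1)))
        (j := Fin.last S.length) (by simp; omega)
      simpa using this
    rw [e1, e2] at hp
    cases h1 : S.getD (r - 1) false <;> cases h2 : S.getD (S.length - 1) false <;>
      rw [h1, h2] at hp hrs <;> simp at hp hrs
  have h0X : (⟨0, Nat.succ_pos _⟩ : Fin (S.length + 1)) ∈ X := by
    have : a = (⟨0, Nat.succ_pos _⟩ : Fin (S.length + 1)) := Fin.ext h0
    exact this ▸ haX
  have h1X : (⟨1, by omega⟩ : Fin (S.length + 1)) ∈ X := by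
    by_contra h1n
    have hp := hom_pure hX h1n hrX hlast
    have e1 : (stringGraph S).Adj ⟨1, by omega⟩ ⟨r, by omega⟩ ↔
        S.getD (r - 1) false = true := by
      have := sg_adj_far (S := S) (i := (⟨1, by omega⟩ : Fin (S.length+1)))
        (j := (⟨r, by omega⟩ : Fin (S.length+1))) (by simp; omega)
      simpa using this
    have e2 : (stringGraph S).Adj ⟨1, by omega⟩ (Fin.last S.length) ↔
        S.getD (S.length - 1) false = true := by
      have := sg_adj_far (S := S) (i := (⟨1, by omega⟩ : Fin (S.length+1)))
        (j := Fin.last S.length) (by simp; omega)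
      simpa using this
    rw [e1, e2] at hp
    cases h1 : S.getD (r - 1) false <;> cases h2 : S.getD (S.length - 1) false <;>
      rw [h1, h2] at hp hrs <;> simp at hp hrs
  exact sg_no_homog_of_01 (by omega) hX h0X h1X

lemma getD_take_eq (T : List Bool) {n i : ℕ} (h : i < n) :
    (T.take n).getD i false = T.getD i false := by
  simp [List.getD_eq_getElem?_getD, List.getElem?_take_of_lt h]

lemma sg_take_embed (T : List Bool) (n : ℕ) (hn : n ≤ T.length) :
    Nonempty (stringGraph (T.take n) ↪g stringGraph T) := by
  have hlen : (T.take n).length = n := List.length_take.trans (min_eq_left hn)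
  have hcast : (T.take n).length + 1 ≤ T.length + 1 := by omega
  have key : ∀ a b : Fin ((T.take n).length + 1), (a : ℕ) < (b : ℕ) →
      ((stringGraph T).Adj (Fin.castLE hcast a) (Fin.castLE hcast b) ↔
        (stringGraph (T.take n)).Adj a b) := by
    intro a b hab
    rw [sg_adj_iff (by simpa using hab), sg_adj_iff hab]
    have hb : (b : ℕ) - 1 < n := by have := b.2; omega
    rw [Fin.coe_castLE, Fin.coe_castLE, getD_take_eq T hb]
  refine ⟨⟨⟨fun i => Fin.castLE hcast i, fun i j h => Fin.ext (by simpa using congrArg Fin.val h)⟩, ?_⟩⟩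
  intro a b
  rcases lt_trichotomy ((a : ℕ)) ((b : ℕ)) with h | h | h
  · exact key a b h
  · have : a = b := Fin.ext h
    subst this
    simp
  · rw [SimpleGraph.adj_comm, SimpleGraph.adj_comm (G := stringGraph (T.take n))]
    exact key b a h

lemma flatten_replicate_length (S : List Bool) (k : ℕ) :
    ((List.replicate k S).flatten).length = k * S.length := by
  induction k with
  | zero => simp
  | succ k IH =>
    rw [List.replicate_succ, List.flatten_cons, List.length_append, IH]
    ring

lemma flatten_replicate_getD (S : List Bool) (k : ℕ) :
    ∀ i, i < k * S.length →
      ((List.replicate k S).flatten).getD i false = S.getD (i % S.length) false := by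
  induction k with
  | zero => intro i hi; omega
  | succ k IH =>
    intro i hi
    rw [List.replicate_succ, List.flatten_cons]
    by_cases h : i < S.length
    · rw [List.getD_eq_getElem?_getD, List.getElem?_append_left h,
        ← List.getD_eq_getElem?_getD, Nat.mod_eq_of_lt h]
    · push_neg at h
      have hmul : (k + 1) * S.length = k * S.length + S.length := by ring
      rw [List.getD_eq_getElem?_getD, List.getElem?_append_right h,
        ← List.getD_eq_getElem?_getD, IH (i - S.length) (by omega),
        Nat.mod_eq_sub_mod h]


/-- If a hereditary class of graphs contains the graph induced by `S^k` for every
positive integer `k`, for some fixed nonempty `(0,1)`-string `S`, then the class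
contains infinitely many pairwise non-isomorphic prime graphs. -/
theorem hereditary_infinitely_many_primes (C : Set (Σ m : ℕ, SimpleGraph (Fin m)))
    (hhered : ∀ p ∈ C, ∀ (m : ℕ) (H : SimpleGraph (Fin m)),
      Nonempty (H ↪g p.2) → (⟨m, H⟩ : Σ m : ℕ, SimpleGraph (Fin m)) ∈ C)
    (S : List Bool) (hS : S ≠ [])
    (hmem : ∀ k, 0 < k →
      (⟨((List.replicate k S).flatten).length + 1,
        stringGraph ((List.replicate k S).flatten)⟩ : Σ m : ℕ, SimpleGraph (Fin m)) ∈ C) :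
    ∃ f : ℕ → Σ m : ℕ, SimpleGraph (Fin m),
      (∀ i, f i ∈ C ∧ IsPrimeGraph (f i).2) ∧
      ∀ i j, i ≠ j → IsEmpty ((f i).2 ≃g (f j).2) := by
  set L := S.length with hLdef
  have hL : 0 < L := List.length_pos_iff.mpr hS
  set T : ℕ → List Bool := fun n => (List.replicate n S).flatten with hT
  set P : ℕ → List Bool := fun n => (T n).take n with hP
  have hTlen : ∀ n, (T n).length = n * L := fun n => flatten_replicate_length S n
  have hnle : ∀ n, n ≤ (T n).length := by
    intro n; rw [hTlen]; calc n = n * 1 := (mul_one n).symm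
                           _ ≤ n * L := Nat.mul_le_mul_left n hL
  have hPlen : ∀ n, (P n).length = n := by
    intro n
    simp only [hP]
    exact List.length_take.trans (min_eq_left (hnle n))
  have hPget : ∀ n, ∀ i < n, (P n).getD i false = S.getD (i % L) false := by
    intro n i hi
    simp only [hP]
    rw [getD_take_eq (T n) hi]
    exact flatten_replicate_getD S n i (by rw [← hTlen n]; exact lt_of_lt_of_le hi (hnle n))
  -- the graphs
  refine ⟨fun i => ⟨(P (L + 4 + i)).length + 1, stringGraph (P (L + 4 + i))⟩, ?_, ?_⟩
  · intro i
    constructor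
    · exact hhered _ (hmem (L + 4 + i) (by omega)) _ _
        (sg_take_embed (T (L + 4 + i)) (L + 4 + i) (hnle _))
    · -- primality
      set n := L + 4 + i with hn
      by_cases hconst : ∀ a b, a < L → b < L → S.getD a false = S.getD b false
      · apply prime_of_const (P n) (by rw [hPlen]; omega)
        intro x y hx hy
        rw [hPlen] at hx hy
        rw [hPget n x hx, hPget n y hy]
        exact hconst _ _ (Nat.mod_lt _ hL) (Nat.mod_lt _ hL)
      · push_neg at hconst
        obtain ⟨u, v, hu, hv, huv⟩ := hconst
        have hL2 : 2 ≤ L := by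
          by_contra hL2
          have hu0 : u = 0 := by omega
          have hv0 : v = 0 := by omega
          rw [hu0, hv0] at huv
          exact huv rfl
        have ht : (n - 1) % L < L := Nat.mod_lt _ hL
        obtain ⟨ρ, hρL, hρne⟩ :
            ∃ ρ, ρ < L ∧ S.getD ρ false ≠ S.getD ((n - 1) % L) false := by
          by_cases hd : S.getD u false = S.getD ((n - 1) % L) false
          · exact ⟨v, hv, fun h => huv (hd.trans h.symm)⟩
          · exact ⟨u, hu, hd⟩
        obtain ⟨r, hr3, hrn, hrmod⟩ :
            ∃ r, 3 ≤ r ∧ r + 2 ≤ n ∧ (r - 1) % L = ρ := by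
          by_cases h2 : 2 ≤ ρ
          · exact ⟨ρ + 1, by omega, by omega,
              by simpa using Nat.mod_eq_of_lt hρL⟩
          · refine ⟨ρ + L + 1, by omega, by omega, ?_⟩
            simpa [Nat.add_mod_right] using Nat.mod_eq_of_lt hρL
        apply prime_of_exists (P n) (by rw [hPlen]; omega) r hr3 (by rw [hPlen]; omega)
        rw [hPlen, hPget n (r - 1) (by omega), hPget n (n - 1) (by omega), hrmod]
        exact hρne
  · intro i j hij
    constructor
    intro iso
    have hcard := Fintype.card_congr iso.toEquiv
    simp only [Fintype.card_fin] at hcard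
    rw [hPlen, hPlen] at hcard
    omega
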